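/- arXiv:2007.11259 — 3 statements merged into one kernel-verified Lean document; each statement's English description precedes it below -/
import Mathlib

section
/- Consider the binary logistic model on ℝⁿ with weight vector w ∈ ℝⁿ: for y ∈ {−1, 1}, p(y = 1 | x) = σ(wᵀx) and p(y = −1 | x) = 1 − σ(wᵀx), where σ(t) = 1/(1 + e^{−t}). Let x₁, …, x_N ∈ ℝⁿ be a finite dataset and define the averaged Fisher matrix F = (1/N) ∑_{i=1}^{N} ∑_{y ∈ {−1,1}} p(y|x_i) · (∇_x log p(y|x_i))(∇_x log p(y|x_i))ᵀ. Then F = c · w wᵀ and tr(F) = c · ‖w‖₂², where c = (1/N) ∑_{i=1}^{N} p(y = 1 | x_i) · p(y = −1 | x_i). -/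
open scoped BigOperators
open InnerProductSpace

private lemma grad_comp_linear {n : ℕ} (w x : EuclideanSpace ℝ (Fin n)) {g : ℝ → ℝ} {g' : ℝ}
    (hg : HasDerivAt g g' (∑ k, w k * x k)) :
    gradient (fun x' : EuclideanSpace ℝ (Fin n) => g (∑ k, w k * x' k)) x = g' • w := by
  have hL : ∀ x' : EuclideanSpace ℝ (Fin n), (innerSL ℝ w) x' = ∑ k, w k * x' k := by
    intro x'
    simp [innerSL_apply_apply, PiLp.inner_apply, RCLike.inner_apply, mul_comm]
  have hf : HasFDerivAt (fun x' : EuclideanSpace ℝ (Fin n) => ∑ k, w k * x' k)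
      (innerSL ℝ w) x := by
    have := (innerSL ℝ w).hasFDerivAt (x := x)
    simpa [funext hL] using this
  have h1 : HasFDerivAt (fun x' : EuclideanSpace ℝ (Fin n) => g (∑ k, w k * x' k))
      (g' • (innerSL ℝ w)) x := HasDerivAt.comp_hasFDerivAt x hg hf
  have h2 : HasGradientAt (fun x' : EuclideanSpace ℝ (Fin n) => g (∑ k, w k * x' k))
      (g' • w) x := by
    rw [hasGradientAt_iff_hasFDerivAt]
    refine h1.congr_fderiv ?_
    ext y
    simp [toDual_apply_apply, real_inner_smul_left, innerSL_apply_apply]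
  exact h2.gradient

/-- **Averaged Fisher matrix of the binary logistic model over a dataset.**
For the model `p(y = 1 | x) = σ(wᵀx)`, `p(y = -1 | x) = 1 - σ(wᵀx)` with
`σ(t) = 1/(1 + e^{-t})`, and a dataset `x₁, …, x_N`, the averaged Fisher matrix
`F = (1/N) ∑ᵢ ∑_{y ∈ {-1,1}} p(y|xᵢ) (∇ₓ log p(y|xᵢ))(∇ₓ log p(y|xᵢ))ᵀ`
equals `c · w wᵀ` with `c = (1/N) ∑ᵢ p(y=1|xᵢ) p(y=-1|xᵢ)`, and
`tr F = c · ‖w‖₂²`. -/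
theorem logistic_averaged_fisher_eq_rank_one
    {n : ℕ} (w : EuclideanSpace ℝ (Fin n))
    (N : ℕ) (hN : 0 < N) (xs : Fin N → EuclideanSpace ℝ (Fin n))
    (σ : ℝ → ℝ) (hσ : ∀ t, σ t = 1 / (1 + Real.exp (-t)))
    (c : ℝ)
    (hc : c = (1 / (N : ℝ)) * ∑ a : Fin N,
      σ (∑ k, w k * xs a k) * (1 - σ (∑ k, w k * xs a k)))
    (F : Matrix (Fin n) (Fin n) ℝ)
    (hF : ∀ i j, F i j = (1 / (N : ℝ)) * ∑ a : Fin N,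
      (σ (∑ k, w k * xs a k) *
          gradient (fun x' : EuclideanSpace ℝ (Fin n) =>
            Real.log (σ (∑ k, w k * x' k))) (xs a) i *
          gradient (fun x' : EuclideanSpace ℝ (Fin n) =>
            Real.log (σ (∑ k, w k * x' k))) (xs a) j +
        (1 - σ (∑ k, w k * xs a k)) *
          gradient (fun x' : EuclideanSpace ℝ (Fin n) =>
            Real.log (1 - σ (∑ k, w k * x' k))) (xs a) i *
          gradient (fun x' : EuclideanSpace ℝ (Fin n) =>
            Real.log (1 - σ (∑ k, w k * x' k))) (xs a) j)) :
    (∀ i j, F i j = c * (w i * w j)) ∧ F.trace = c * ∑ i, w i ^ 2 := by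
  -- basic positivity facts
  have hpos : ∀ t : ℝ, (0:ℝ) < 1 + Real.exp (-t) := fun t => by positivity
  have hσpos : ∀ t, 0 < σ t := by
    intro t; rw [hσ]; positivity
  have hσlt : ∀ t, σ t < 1 := by
    intro t; rw [hσ, div_lt_one (hpos t)]
    simpa using Real.exp_pos (-t)
  -- derivative of σ
  have hσderiv : ∀ s : ℝ, HasDerivAt σ (σ s * (1 - σ s)) s := by
    intro s
    have h1 : HasDerivAt (fun t : ℝ => -t) (-1) s := (hasDerivAt_id s).neg
    have h2 : HasDerivAt (fun t : ℝ => Real.exp (-t)) (-Real.exp (-s)) s := by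
      simpa using h1.exp
    have h3 : HasDerivAt (fun t : ℝ => 1 + Real.exp (-t)) (-Real.exp (-s)) s :=
      h2.const_add 1
    have h4 : HasDerivAt (fun t : ℝ => (1 + Real.exp (-t))⁻¹)
        (-(-Real.exp (-s)) / (1 + Real.exp (-s)) ^ 2) s := h3.inv (ne_of_gt (hpos s))
    have heq : σ = fun t : ℝ => (1 + Real.exp (-t))⁻¹ := by
      funext t; rw [hσ, one_div]
    rw [heq]
    convert h4 using 1
    have h0 : (1:ℝ) + Real.exp (-s) ≠ 0 := ne_of_gt (hpos s)
    simp only [neg_neg]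
    field_simp
    ring
  -- derivative of log σ
  have hlogσ : ∀ s : ℝ, HasDerivAt (fun t => Real.log (σ t)) (1 - σ s) s := by
    intro s
    have := (hσderiv s).log (ne_of_gt (hσpos s))
    convert this using 1
    field_simp [ne_of_gt (hσpos s)]
    try ring
  -- derivative of log (1 - σ)
  have hlog1σ : ∀ s : ℝ, HasDerivAt (fun t => Real.log (1 - σ t)) (-(σ s)) s := by
    intro s
    have h1 : HasDerivAt (fun t : ℝ => 1 - σ t) (-(σ s * (1 - σ s))) s :=
      (hσderiv s).const_sub 1
    have h2 := h1.log (ne_of_gt (by linarith [hσlt s] : (0:ℝ) < 1 - σ s))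
    convert h2 using 1
    have h1σ : (1 : ℝ) - σ s ≠ 0 := ne_of_gt (by linarith [hσlt s])
    field_simp
    try ring
  -- gradients
  have hgrad1 : ∀ a : Fin N, gradient (fun x' : EuclideanSpace ℝ (Fin n) =>
      Real.log (σ (∑ k, w k * x' k))) (xs a) = (1 - σ (∑ k, w k * xs a k)) • w :=
    fun a => grad_comp_linear w (xs a) (hlogσ _)
  have hgrad2 : ∀ a : Fin N, gradient (fun x' : EuclideanSpace ℝ (Fin n) =>
      Real.log (1 - σ (∑ k, w k * x' k))) (xs a) = (-(σ (∑ k, w k * xs a k))) • w :=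
    fun a => grad_comp_linear w (xs a) (hlog1σ _)
  have hFij : ∀ i j, F i j = c * (w i * w j) := by
    intro i j
    rw [hF i j, hc]
    simp only [hgrad1, hgrad2, PiLp.smul_apply, smul_eq_mul]
    conv_rhs => rw [mul_assoc, Finset.sum_mul]
    congr 1
    apply Finset.sum_congr rfl
    intro a _
    ring
  refine ⟨hFij, ?_⟩
  rw [Matrix.trace, Finset.mul_sum]
  apply Finset.sum_congr rfl
  intro i _
  rw [Matrix.diag_apply, hFij i i]
  ring
end

section
/- Let Z and Y be finite types, n a natural number, and p : ℝⁿ → Z → ℝ a family of probability mass functions such that for every x and z, p z x > 0 and ∑_{z ∈ Z} p z x = 1, with x ↦ p z x differentiable for every z. Let g : Z → Y be any function and define the induced family q : ℝⁿ → Y → ℝ by q y x = ∑_{z : g(z) = y} p z x; assume q y x > 0 for all y, x. Define the Fisher matrices S_p(x) = ∑_{z ∈ Z} p z x · (∇_x log p z x)(∇_x log p z x)ᵀ and S_q(x) = ∑_{y ∈ Y} q y x · (∇_x log q y x)(∇_x log q y x)ᵀ. Then for every x ∈ ℝⁿ and every v ∈ ℝⁿ, vᵀ S_q(x) v ≤ vᵀ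 S_p(x) v; in particular tr(S_q(x)) ≤ tr(S_p(x)). -/
open scoped BigOperators RealInnerProductSpace

/-- The Fisher (sensitivity) matrix of a family of probability mass functions
`p : ℝⁿ → Z → ℝ` (written `p x z`) with respect to the input `x`:
`S(x) i j = ∑ z, p x z · ∂ᵢ log p x z · ∂ⱼ log p x z`. -/
noncomputable def fisherMatrix {Z : Type*} [Fintype Z] {n : ℕ}
    (p : EuclideanSpace ℝ (Fin n) → Z → ℝ) (x : EuclideanSpace ℝ (Fin n)) :
    Matrix (Fin n) (Fin n) ℝ :=
  fun i j => ∑ z, p x z *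
    gradient (fun y => Real.log (p y z)) x i *
    gradient (fun y => Real.log (p y z)) x j

lemma grad_dot {n : ℕ} (f : EuclideanSpace ℝ (Fin n) → ℝ) (x : EuclideanSpace ℝ (Fin n))
    (v : Fin n → ℝ) :
    ∑ i, v i * gradient f x i = fderiv ℝ f x ((WithLp.equiv 2 (Fin n → ℝ)).symm v) := by
  have h : (fderiv ℝ f x) ((WithLp.equiv 2 (Fin n → ℝ)).symm v)
      = ⟪gradient f x, (WithLp.equiv 2 (Fin n → ℝ)).symm v⟫ := by
    rw [gradient, InnerProductSpace.toDual_symm_apply]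
  rw [h]
  rw [PiLp.inner_apply]
  simp [RCLike.inner_apply, mul_comm]

lemma quad_eq {Z : Type*} [Fintype Z] {n : ℕ}
    (p : EuclideanSpace ℝ (Fin n) → Z → ℝ) (x : EuclideanSpace ℝ (Fin n))
    (hpos : ∀ z, 0 < p x z)
    (hdiff : ∀ z, DifferentiableAt ℝ (fun y => p y z) x)
    (v : Fin n → ℝ) :
    ∑ i, ∑ j, v i * fisherMatrix p x i j * v j =
      ∑ z, (fderiv ℝ (fun y => p y z) x ((WithLp.equiv 2 (Fin n → ℝ)).symm v))^2 / p x z := by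
  set G : Z → Fin n → ℝ := fun z i => gradient (fun y => Real.log (p y z)) x i with hG
  have step1 : ∑ i, ∑ j, v i * fisherMatrix p x i j * v j =
      ∑ z, p x z * (∑ i, v i * G z i)^2 := by
    trans ∑ i, ∑ j, ∑ z, v i * (p x z * G z i * G z j) * v j
    · refine Finset.sum_congr rfl fun i _ => Finset.sum_congr rfl fun j _ => ?_
      simp only [fisherMatrix, Finset.mul_sum, Finset.sum_mul, hG]
    · trans ∑ i, ∑ z, ∑ j, v i * (p x z * G z i * G z j) * v j
      · exact Finset.sum_congr rfl fun i _ => Finset.sum_comm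
      trans ∑ z, ∑ i, ∑ j, v i * (p x z * G z i * G z j) * v j
      · exact Finset.sum_comm
      refine Finset.sum_congr rfl fun z _ => ?_
      rw [sq, Finset.sum_mul_sum, Finset.mul_sum]
      refine Finset.sum_congr rfl fun i _ => ?_
      rw [Finset.mul_sum]
      exact Finset.sum_congr rfl fun j _ => by ring
  rw [step1]
  refine Finset.sum_congr rfl fun z _ => ?_
  have hlog : HasFDerivAt (fun y => Real.log (p y z))
      ((p x z)⁻¹ • fderiv ℝ (fun y => p y z) x) x :=
    by have := (Real.hasDerivAt_log (hpos z).ne').comp_hasFDerivAt x (hdiff z).hasFDerivAt; exact this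
  have hgd := grad_dot (fun y => Real.log (p y z)) x v
  rw [hlog.fderiv] at hgd
  rw [hG]
  simp only []
  rw [hgd]
  have hne : p x z ≠ 0 := (hpos z).ne'
  simp only [ContinuousLinearMap.coe_smul', Pi.smul_apply, smul_eq_mul]
  field_simp

/-- **Data-processing inequality for Fisher information.**
If `q : ℝⁿ → Y → ℝ` is obtained from `p : ℝⁿ → Z → ℝ` by pushing forward along
a deterministic map `g : Z → Y`, i.e. `q x y = ∑_{z : g z = y} p x z`, then for
every `x` and every direction `v`, `vᵀ S_q(x) v ≤ vᵀ S_p(x) v`; in particular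
`tr S_q(x) ≤ tr S_p(x)`. -/
theorem fisher_data_processing_inequality
    {Z Y : Type*} [Fintype Z] [Fintype Y] [DecidableEq Y] {n : ℕ}
    (p : EuclideanSpace ℝ (Fin n) → Z → ℝ)
    (hpos : ∀ x z, 0 < p x z)
    (hsum : ∀ x, ∑ z, p x z = 1)
    (hdiff : ∀ z, Differentiable ℝ (fun x => p x z))
    (g : Z → Y)
    (q : EuclideanSpace ℝ (Fin n) → Y → ℝ)
    (hq : ∀ x y, q x y = ∑ z ∈ Finset.univ.filter (fun z => g z = y), p x z)
    (hqpos : ∀ x y, 0 < q x y) :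
    ∀ x : EuclideanSpace ℝ (Fin n),
      (∀ v : Fin n → ℝ,
        (∑ i, ∑ j, v i * fisherMatrix q x i j * v j) ≤
          (∑ i, ∑ j, v i * fisherMatrix p x i j * v j)) ∧
      (fisherMatrix q x).trace ≤ (fisherMatrix p x).trace := by
  intro x
  have hqfd : ∀ y, HasFDerivAt (fun x' => q x' y)
      (∑ z ∈ Finset.univ.filter (fun z => g z = y), fderiv ℝ (fun x' => p x' z) x) x := by
    intro y
    have h1 : HasFDerivAt (fun x' => ∑ z ∈ Finset.univ.filter (fun z => g z = y), p x' z)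
        (∑ z ∈ Finset.univ.filter (fun z => g z = y), fderiv ℝ (fun x' => p x' z) x) x :=
      HasFDerivAt.fun_sum fun z _ => ((hdiff z) x).hasFDerivAt
    have h2 : (fun x' => q x' y)
        = fun x' => ∑ z ∈ Finset.univ.filter (fun z => g z = y), p x' z :=
      funext fun x' => hq x' y
    rw [h2]; exact h1
  have hmain : ∀ v : Fin n → ℝ,
      (∑ i, ∑ j, v i * fisherMatrix q x i j * v j) ≤
        (∑ i, ∑ j, v i * fisherMatrix p x i j * v j) := by
    intro v
    rw [quad_eq p x (fun z => hpos x z) (fun z => (hdiff z) x) v,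
        quad_eq q x (fun y => hqpos x y) (fun y => (hqfd y).differentiableAt) v]
    set vE : EuclideanSpace ℝ (Fin n) := (WithLp.equiv 2 (Fin n → ℝ)).symm v with hvE
    set a : Z → ℝ := fun z => fderiv ℝ (fun y => p y z) x vE with ha
    have hb : ∀ y, fderiv ℝ (fun x' => q x' y) x vE
        = ∑ z ∈ Finset.univ.filter (fun z => g z = y), a z := by
      intro y
      rw [(hqfd y).fderiv]
      simp [ha]
    calc ∑ y, (fderiv ℝ (fun x' => q x' y) x vE)^2 / q x y
        = ∑ y, (∑ z ∈ Finset.univ.filter (fun z => g z = y), a z)^2 /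
            (∑ z ∈ Finset.univ.filter (fun z => g z = y), p x z) := by
          refine Finset.sum_congr rfl fun y _ => ?_
          rw [hb y, hq x y]
      _ ≤ ∑ y, ∑ z ∈ Finset.univ.filter (fun z => g z = y), (a z)^2 / p x z :=
          Finset.sum_le_sum fun y _ =>
            Finset.sq_sum_div_le_sum_sq_div _ _ (fun z _ => hpos x z)
      _ = ∑ z, (a z)^2 / p x z := Finset.sum_fiberwise _ _ _
  refine ⟨hmain, ?_⟩
  have hdiagp : ∀ (k : Fin n),
      ∑ i, ∑ j, (Pi.single k 1 : Fin n → ℝ) i * fisherMatrix p x i j *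
        (Pi.single k 1 : Fin n → ℝ) j = fisherMatrix p x k k := by
    intro k
    simp [Pi.single_apply, ite_mul, mul_ite, Finset.sum_ite_eq']
  have hdiagq : ∀ (k : Fin n),
      ∑ i, ∑ j, (Pi.single k 1 : Fin n → ℝ) i * fisherMatrix q x i j *
        (Pi.single k 1 : Fin n → ℝ) j = fisherMatrix q x k k := by
    intro k
    simp [Pi.single_apply, ite_mul, mul_ite, Finset.sum_ite_eq']
  have htrp : (fisherMatrix p x).trace = ∑ k, fisherMatrix p x k k := rfl
  have htrq : (fisherMatrix q x).trace = ∑ k, fisherMatrix q x k k := rfl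
  rw [htrp, htrq]
  refine Finset.sum_le_sum fun k _ => ?_
  rw [← hdiagq k, ← hdiagp k]
  exact hmain (Pi.single k 1)
end

section
/- Let Z be a finite type, n a natural number, and p : ℝⁿ → Z → ℝ a family of probability mass functions such that for every x ∈ ℝⁿ and z ∈ Z one has p z x > 0 and ∑_{z ∈ Z} p z x = 1, and such that x ↦ p z x is twice continuously differentiable for every z. Define S(x) = ∑_{z ∈ Z} p z x · (∇_x log p z x)(∇_x log p z x)ᵀ and let λ₁(x) denote its largest eigenvalue. Then for every fixed x, (1/ε²) · sup_{‖δ‖₂ = ε} KL(p(·|x+δ) ‖ p(·|x)) converges to λ₁(x)/2 as ε → 0⁺, where KL(q ‖ r) = ∑_{z} q z · log(q z / r z). -/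
open scoped BigOperators

set_option maxHeartbeats 1000000 in
private lemma quad_approx' {E : Type*} [NormedAddCommGroup E] [NormedSpace ℝ E]
    {g : E → ℝ} {Dg : E → E →L[ℝ] ℝ} {B : E →L[ℝ] E →L[ℝ] ℝ}
    (hg : ∀ y, HasFDerivAt g (Dg y) y)
    (hDg : Differentiable ℝ Dg)
    (hD2 : Continuous (fderiv ℝ Dg))
    (hg0 : g 0 = 0) (hDg0 : Dg 0 = 0) (hB : fderiv ℝ Dg 0 = B)
    (hBsymm : ∀ u v, B u v = B v u)
    {c : ℝ} (hc : 0 < c) :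
    ∃ r > 0, ∀ δ : E, ‖δ‖ ≤ r → |g δ - B δ δ / 2| ≤ c * ‖δ‖ ^ 2 := by
  have hcont : ContinuousAt (fderiv ℝ Dg) 0 := hD2.continuousAt
  rcases (Metric.continuousAt_iff (f := fderiv ℝ Dg) (a := 0)).1 hcont c hc with ⟨r, hr, hball⟩
  refine ⟨r / 2, by positivity, fun δ hδ => ?_⟩
  have step1 : ∀ y : E, ‖y‖ ≤ r / 2 → ‖Dg y - B y‖ ≤ c * ‖y‖ := by
    intro y hy
    have h0 : (0 : E) ∈ Metric.closedBall (0 : E) (r / 2) := by simp; positivity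
    have hy' : y ∈ Metric.closedBall (0 : E) (r / 2) := by simpa using hy
    have := (convex_closedBall (0 : E) (r / 2)).norm_image_sub_le_of_norm_hasFDerivWithin_le
      (f := fun y => Dg y - B y) (f' := fun y => fderiv ℝ Dg y - B)
      (fun z _ => (((hDg z).hasFDerivAt).sub (B.hasFDerivAt)).hasFDerivWithinAt)
      (C := c) (fun z hz => by
        have hzr : dist z (0 : E) < r := by
          have := Metric.mem_closedBall.1 hz
          linarith
        have := hball hzr
        rw [dist_eq_norm (fderiv ℝ Dg z)] at this
        simpa [hB] using this.le) h0 hy'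
    simpa [hDg0] using this
  have hψd : ∀ y : E, HasFDerivAt (fun w => g w - B w w / 2) (Dg y - B y) y := by
    intro y
    have h1 : HasFDerivAt (fun w : E => B w w) ((B y).comp (ContinuousLinearMap.id ℝ E)
        + ContinuousLinearMap.flip B y) y :=
      (B.hasFDerivAt).clm_apply (hasFDerivAt_id y)
    have h2 : HasFDerivAt (fun w : E => B w w / 2)
        ((2:ℝ)⁻¹ • ((B y).comp (ContinuousLinearMap.id ℝ E) + ContinuousLinearMap.flip B y)) y := by
      simpa [div_eq_inv_mul] using h1.const_mul (2:ℝ)⁻¹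
    have h3 := (hg y).sub h2
    refine h3.congr_fderiv ?_
    ext u
    simp [ContinuousLinearMap.flip_apply, hBsymm u y]
    ring
  have h0 : (0 : E) ∈ Metric.closedBall (0 : E) ‖δ‖ := by simp
  have hδ' : δ ∈ Metric.closedBall (0 : E) ‖δ‖ := by simp
  have key := (convex_closedBall (0 : E) ‖δ‖).norm_image_sub_le_of_norm_hasFDerivWithin_le
    (f := fun w => g w - B w w / 2) (f' := fun y => Dg y - B y)
    (fun z _ => (hψd z).hasFDerivWithinAt)
    (C := c * ‖δ‖) (fun z hz => by
      have hz' : ‖z‖ ≤ ‖δ‖ := by simpa using Metric.mem_closedBall.1 hz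
      calc ‖Dg z - B z‖ ≤ c * ‖z‖ := step1 z (le_trans hz' hδ)
        _ ≤ c * ‖δ‖ := by nlinarith) h0 hδ'
  have : |g δ - B δ δ / 2| ≤ c * ‖δ‖ * ‖δ‖ := by
    simpa [hg0, Real.norm_eq_abs] using key
  nlinarith [this]

private lemma sup_tendsto_aux {E : Type*} [NormedAddCommGroup E] [NormedSpace ℝ E]
    (g : E → ℝ) (Q : E → ℝ) (lam1 : ℝ) (v : E)
    (happrox : ∀ c : ℝ, 0 < c → ∃ r > 0, ∀ δ : E, ‖δ‖ ≤ r → |g δ - Q δ / 2| ≤ c * ‖δ‖ ^ 2)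
    (hub : ∀ δ : E, Q δ ≤ lam1 * ‖δ‖ ^ 2)
    (hv : ‖v‖ = 1)
    (hQv : ∀ t : ℝ, Q (t • v) = t ^ 2 * lam1) :
    Filter.Tendsto (fun ε : ℝ => (1 / ε ^ 2) * sSup {y : ℝ | ∃ δ : E, ‖δ‖ = ε ∧ y = g δ})
      (nhdsWithin 0 (Set.Ioi 0)) (nhds (lam1 / 2)) := by
  rw [Metric.tendsto_nhdsWithin_nhds]
  intro η hη
  obtain ⟨r, hr, hA⟩ := happrox (η / 4) (by positivity)
  refine ⟨r, hr, ?_⟩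
  intro ε hε hdist
  have hε0 : (0:ℝ) < ε := hε
  have hεr : ε ≤ r := by
    rw [Real.dist_eq, sub_zero, abs_of_pos hε0] at hdist
    exact hdist.le
  set s : Set ℝ := {y : ℝ | ∃ δ : E, ‖δ‖ = ε ∧ y = g δ} with hs
  have hub' : ∀ y ∈ s, y ≤ lam1 / 2 * ε ^ 2 + η / 4 * ε ^ 2 := by
    rintro y ⟨δ, hδ, rfl⟩
    have h1 := hA δ (hδ ▸ hεr)
    have h2 := hub δ
    rw [hδ] at h1 h2
    have h3 := abs_le.mp h1
    nlinarith [h3.1, h3.2]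
  have hvnorm : ‖ε • v‖ = ε := by rw [norm_smul, hv]; simp [abs_of_pos hε0]
  have hmemv : g (ε • v) ∈ s := ⟨ε • v, hvnorm, rfl⟩
  have hne : s.Nonempty := ⟨_, hmemv⟩
  have hbdd : BddAbove s := ⟨_, hub'⟩
  have hub2 : sSup s ≤ lam1 / 2 * ε ^ 2 + η / 4 * ε ^ 2 := csSup_le hne hub'
  have hlb : lam1 / 2 * ε ^ 2 - η / 4 * ε ^ 2 ≤ sSup s := by
    refine le_trans ?_ (le_csSup hbdd hmemv)
    have h1 := hA (ε • v) (by rw [hvnorm]; exact hεr)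
    rw [hvnorm, hQv ε] at h1
    have h3 := abs_le.mp h1
    nlinarith [h3.1]
  have hε2 : (0:ℝ) < ε ^ 2 := by positivity
  rw [Real.dist_eq]
  have e1 : 1 / ε ^ 2 * (lam1 / 2 * ε ^ 2 + η / 4 * ε ^ 2) = lam1 / 2 + η / 4 := by
    field_simp
  have e2 : 1 / ε ^ 2 * (lam1 / 2 * ε ^ 2 - η / 4 * ε ^ 2) = lam1 / 2 - η / 4 := by
    field_simp
  have hpos : (0:ℝ) < 1 / ε ^ 2 := by positivity
  have hu := mul_le_mul_of_nonneg_left hub2 hpos.le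
  have hl := mul_le_mul_of_nonneg_left hlb hpos.le
  rw [e1] at hu
  rw [e2] at hl
  rw [abs_lt]
  constructor <;> nlinarith

set_option maxHeartbeats 1000000 in
set_option synthInstance.maxHeartbeats 400000 in
/-- **Asymptotics of the worst-case KL divergence under small input perturbations.**
For a finite family of everywhere-positive, twice continuously differentiable
probability mass functions `p`, the worst-case KL divergence over perturbations
`δ` with `‖δ‖₂ = ε`, rescaled by `1/ε²`, converges to `λ₁(x)/2` as `ε → 0⁺`,
where `λ₁(x)` is the largest eigenvalue of the Fisher matrix `S(x)`. -/
theorem sup_kl_over_sphere_asymptotics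
    {Z : Type*} [Fintype Z] {n : ℕ}
    (p : EuclideanSpace ℝ (Fin n) → Z → ℝ)
    (hpos : ∀ x z, 0 < p x z)
    (hsum : ∀ x, ∑ z, p x z = 1)
    (hsmooth : ∀ z, ContDiff ℝ 2 (fun x => p x z))
    (x : EuclideanSpace ℝ (Fin n))
    (lam1 : ℝ) (v1 : Fin n → ℝ)
    (hv_unit : ∑ i, v1 i ^ 2 = 1)
    (heig : (fisherMatrix p x).mulVec v1 = lam1 • v1)
    (hmax : ∀ (μ : ℝ) (v : Fin n → ℝ), v ≠ 0 →
      (fisherMatrix p x).mulVec v = μ • v → μ ≤ lam1) :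
    Filter.Tendsto
      (fun ε : ℝ => (1 / ε ^ 2) *
        sSup {y : ℝ | ∃ δ : EuclideanSpace ℝ (Fin n), ‖δ‖ = ε ∧
          y = ∑ z, p (x + δ) z * Real.log (p (x + δ) z / p x z)})
      (nhdsWithin 0 (Set.Ioi 0)) (nhds (lam1 / 2)) := by
  classical
  -- basic abbreviations
  set D : Z → EuclideanSpace ℝ (Fin n) → (EuclideanSpace ℝ (Fin n) →L[ℝ] ℝ) :=
    fun z => fderiv ℝ (fun y => p y z) with hD_def
  have hdiff : ∀ z, Differentiable ℝ (fun y => p y z) :=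
    fun z => (hsmooth z).differentiable two_ne_zero
  have hq : ∀ z y, HasFDerivAt (fun y => p y z) (D z y) y :=
    fun z y => (hdiff z y).hasFDerivAt
  have hshift : ∀ z (y : EuclideanSpace ℝ (Fin n)),
      HasFDerivAt (fun w => p (x + w) z) (D z (x + y)) y := by
    intro z y
    have h := (hq z (x + y)).comp y ((hasFDerivAt_id y).const_add x)
    simpa [Function.comp_def] using h
  have hsumD : ∀ y, ∑ z, D z y = 0 := by
    intro y
    have h1 : HasFDerivAt (fun w => ∑ z, p w z) (∑ z, D z y) y :=
      HasFDerivAt.fun_sum fun z _ => hq z y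
    have h2 : (fun w => ∑ z, p w z) = fun _ => (1:ℝ) := funext hsum
    rw [h2] at h1
    exact h1.unique (hasFDerivAt_const 1 y)
  -- the KL function and its derivative
  set g' : EuclideanSpace ℝ (Fin n) → ℝ :=
    fun δ => ∑ z, p (x + δ) z * (Real.log (p (x + δ) z) - Real.log (p x z)) with hg'_def
  set Dg : EuclideanSpace ℝ (Fin n) → (EuclideanSpace ℝ (Fin n) →L[ℝ] ℝ) :=
    fun y => ∑ z, (Real.log (p (x + y) z) - Real.log (p x z) + 1) • D z (x + y) with hDg_def
  have hlog : ∀ z y, HasFDerivAt (fun w => Real.log (p (x + w) z))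
      ((p (x + y) z)⁻¹ • D z (x + y)) y :=
    fun z y => (hshift z y).log (hpos _ z).ne'
  have hg'deriv : ∀ y, HasFDerivAt g' (Dg y) y := by
    intro y
    apply HasFDerivAt.fun_sum
    intro z _
    have hmul := (hshift z y).mul ((hlog z y).sub_const (Real.log (p x z)))
    refine hmul.congr_fderiv ?_
    rw [add_smul, one_smul, smul_smul, mul_inv_cancel₀ (hpos _ z).ne', one_smul]
    abel
  have hg'0 : g' 0 = 0 := by
    simp [hg'_def]
  have hDg0 : Dg 0 = 0 := by
    have := hsumD x
    simp only [hDg_def, add_zero, sub_self, zero_add, one_smul]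
    exact this
  -- smoothness of Dg
  have hDC : ∀ z, ContDiff ℝ 1 (D z) := by
    intro z
    exact (hsmooth z).fderiv_right (le_refl 2)
  have hshiftC : ContDiff ℝ 1 (fun y : EuclideanSpace ℝ (Fin n) => x + y) :=
    contDiff_const.add contDiff_id
  have hDgC : ContDiff ℝ 1 Dg := by
    apply ContDiff.sum
    intro z _
    apply ContDiff.fun_smul
    · have hc1 : ContDiff ℝ 1 (fun y => p (x + y) z) :=
        ((hsmooth z).of_le one_le_two).comp hshiftC
      exact ((hc1.log fun y => (hpos _ z).ne').sub contDiff_const).add contDiff_const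
    · exact (hDC z).comp hshiftC
  have hDgdiff : Differentiable ℝ Dg := hDgC.differentiable one_ne_zero
  have hD2cont : Continuous (fderiv ℝ Dg) := (contDiff_one_iff_fderiv.mp hDgC).2
  -- second derivative at 0
  set B : EuclideanSpace ℝ (Fin n) →L[ℝ] EuclideanSpace ℝ (Fin n) →L[ℝ] ℝ :=
    ∑ z, (((p x z)⁻¹ • D z x).smulRight (D z x)) with hB_def
  have hBapp : ∀ u v, B u v = ∑ z, (p x z)⁻¹ * D z x u * D z x v := by
    intro u v
    simp [hB_def, ContinuousLinearMap.sum_apply, smul_eq_mul, mul_assoc]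
  have hBsymm : ∀ u v, B u v = B v u := by
    intro u v
    rw [hBapp, hBapp]
    exact Finset.sum_congr rfl fun z _ => by ring
  have hDdiff : ∀ z, Differentiable ℝ (D z) := fun z => (hDC z).differentiable one_ne_zero
  set D2 : Z → (EuclideanSpace ℝ (Fin n) →L[ℝ] EuclideanSpace ℝ (Fin n) →L[ℝ] ℝ) :=
    fun z => fderiv ℝ (D z) x with hD2_def
  have hD2at : ∀ z, HasFDerivAt (fun y => D z (x + y)) (D2 z) 0 := by
    intro z
    have h := ((hDdiff z (x + 0)).hasFDerivAt).comp (0 : EuclideanSpace ℝ (Fin n))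
      ((hasFDerivAt_id (0 : EuclideanSpace ℝ (Fin n))).const_add x)
    simpa [Function.comp_def] using h
  have hsumD2 : ∑ z, D2 z = 0 := by
    have h1 : HasFDerivAt (fun y => ∑ z, D z y) (∑ z, D2 z) x :=
      HasFDerivAt.fun_sum fun z _ => (hDdiff z x).hasFDerivAt
    have h2 : (fun y => ∑ z, D z y) = fun _ => 0 := funext hsumD
    rw [h2] at h1
    exact h1.unique (hasFDerivAt_const 0 x)
  have hDgB : HasFDerivAt Dg
      (∑ z, (D2 z + (((p x z)⁻¹ • D z x).smulRight (D z x)))) 0 := by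
    apply HasFDerivAt.fun_sum
    intro z _
    have hc : HasFDerivAt (fun y => Real.log (p (x + y) z) - Real.log (p x z) + 1)
        ((p x z)⁻¹ • D z x) 0 := by
      have h := ((hlog z 0).sub_const (Real.log (p x z))).add_const (1:ℝ)
      simpa using h
    have h2 := hc.smul (hD2at z)
    refine h2.congr_fderiv ?_
    simp
  have hB : fderiv ℝ Dg 0 = B := by
    have hsum2 : (∑ z, (D2 z + (((p x z)⁻¹ • D z x).smulRight (D z x)))) = B := by
      rw [Finset.sum_add_distrib, hsumD2, hB_def]
      exact zero_add (M := EuclideanSpace ℝ (Fin n) →L[ℝ] EuclideanSpace ℝ (Fin n) →L[ℝ] ℝ) _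
    rw [← hsum2]
    exact hDgB.fderiv
  -- quadratic form and Fisher matrix
  have hgradf : ∀ z, gradient (fun y => Real.log (p y z)) x =
      (InnerProductSpace.toDual ℝ _).symm ((p x z)⁻¹ • D z x) := by
    intro z
    unfold gradient
    rw [((hq z x).log (hpos x z).ne').fderiv]
  have hgrad : ∀ z i, gradient (fun y => Real.log (p y z)) x i
      = (p x z)⁻¹ * D z x (EuclideanSpace.single i (1:ℝ)) := by
    intro z i
    have h1 : gradient (fun y => Real.log (p y z)) x i
        = (inner ℝ (gradient (fun y => Real.log (p y z)) x)
            (EuclideanSpace.single i (1:ℝ)) : ℝ) := by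
      rw [EuclideanSpace.inner_single_right]; simp
    rw [h1, hgradf, InnerProductSpace.toDual_symm_apply]
    simp
  have hdecomp : ∀ z (u : EuclideanSpace ℝ (Fin n)),
      D z x u = ∑ i, u i * D z x (EuclideanSpace.single i (1:ℝ)) := by
    intro z u
    have hu : u = ∑ i, u i • EuclideanSpace.single i (1:ℝ) := by
      have h := (EuclideanSpace.basisFun (Fin n) ℝ).sum_repr u
      simpa [EuclideanSpace.basisFun_apply, EuclideanSpace.basisFun_repr] using h.symm
    conv_lhs => rw [hu]
    rw [map_sum]
    exact Finset.sum_congr rfl fun i _ => by rw [map_smul]; rfl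
  have hDu : ∀ z (u : EuclideanSpace ℝ (Fin n)),
      D z x u = p x z * ∑ i, u i * gradient (fun y => Real.log (p y z)) x i := by
    intro z u
    rw [hdecomp z u, Finset.mul_sum]
    refine Finset.sum_congr rfl fun i _ => ?_
    rw [hgrad z i]
    field_simp
    rw [mul_div_assoc,
      div_self (hpos x z).ne', mul_one]
  have hQmat : ∀ u : EuclideanSpace ℝ (Fin n),
      B u u = ∑ j, (fisherMatrix p x).mulVec (fun i => u i) j * u j := by
    intro u
    have key : ∀ z, (p x z)⁻¹ * D z x u * D z x u
        = ∑ j, ∑ i, p x z * gradient (fun y => Real.log (p y z)) x j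
            * gradient (fun y => Real.log (p y z)) x i * u i * u j := by
      intro z
      rw [hDu z u]
      have hA : ∀ A : ℝ, (p x z)⁻¹ * (p x z * A) * (p x z * A) = p x z * A * A := by
        intro A
        field_simp [(hpos x z).ne']
      rw [hA]
      rw [Finset.mul_sum]
      refine Finset.sum_congr rfl fun j _ => ?_
      rw [Finset.mul_sum, Finset.sum_mul]
      exact Finset.sum_congr rfl fun i _ => by ring
    rw [hBapp]
    simp only [key]
    rw [Finset.sum_comm]
    refine Finset.sum_congr rfl fun j _ => ?_
    simp only [Matrix.mulVec, dotProduct, fisherMatrix]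
    rw [Finset.sum_mul, Finset.sum_comm]
    refine Finset.sum_congr rfl fun i _ => ?_
    rw [Finset.sum_mul, Finset.sum_mul]
  -- spectral bound
  have hn0 : n ≠ 0 := by
    rintro rfl
    simpa using hv_unit
  haveI : Nonempty (Fin n) := ⟨⟨0, Nat.pos_of_ne_zero hn0⟩⟩
  haveI : Nontrivial (EuclideanSpace ℝ (Fin n)) := by
    refine ⟨0, EuclideanSpace.single ⟨0, Nat.pos_of_ne_zero hn0⟩ (1:ℝ), fun h => ?_⟩
    have h2 := congrArg norm h
    simp at h2
  set T : EuclideanSpace ℝ (Fin n) →L[ℝ] EuclideanSpace ℝ (Fin n) :=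
    LinearMap.toContinuousLinearMap (Matrix.toEuclideanLin (fisherMatrix p x)) with hT_def
  have hTapp : ∀ (u : EuclideanSpace ℝ (Fin n)) j,
      T u j = (fisherMatrix p x).mulVec (fun i => u i) j := by
    intro u j
    have h1 : T u = Matrix.toEuclideanLin (fisherMatrix p x) u := by
      rw [hT_def]
      simp
    rw [h1, Matrix.toEuclideanLin_apply]
  have hSsymm : ∀ i j, fisherMatrix p x i j = fisherMatrix p x j i := by
    intro i j
    exact Finset.sum_congr rfl fun z _ => by ring
  have hinner : ∀ u v : EuclideanSpace ℝ (Fin n), (inner ℝ u v : ℝ) = ∑ i, u i * v i := by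
    intro u v
    simp [PiLp.inner_apply, RCLike.inner_apply, starRingEnd_apply, star_trivial]
    exact Finset.sum_congr rfl fun i _ => mul_comm _ _
  have hreap : ∀ u : EuclideanSpace ℝ (Fin n), T.reApplyInnerSelf u = B u u := by
    intro u
    have h2 : T.reApplyInnerSelf u = (inner ℝ (T u) u : ℝ) := by
      rw [ContinuousLinearMap.reApplyInnerSelf_apply]
      simp
    rw [h2, hinner, hQmat u]
    exact Finset.sum_congr rfl fun j _ => by rw [hTapp]
  have hsymT : IsSelfAdjoint T := by
    rw [ContinuousLinearMap.isSelfAdjoint_iff_isSymmetric]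
    intro u v
    show (inner ℝ (T u) v : ℝ) = (inner ℝ u (T v) : ℝ)
    rw [hinner, hinner]
    simp only [hTapp, Matrix.mulVec, dotProduct]
    calc ∑ j, (∑ i, fisherMatrix p x j i * u i) * v j
        = ∑ j, ∑ i, fisherMatrix p x j i * u i * v j :=
          Finset.sum_congr rfl fun j _ => Finset.sum_mul _ _ _
      _ = ∑ i, ∑ j, fisherMatrix p x j i * u i * v j := Finset.sum_comm
      _ = ∑ i, u i * ∑ j, fisherMatrix p x i j * v j := by
          refine Finset.sum_congr rfl fun i _ => ?_
          rw [Finset.mul_sum]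
          exact Finset.sum_congr rfl fun j _ => by rw [hSsymm j i]; ring
  obtain ⟨x₀, hx₀mem, hx₀max⟩ := (isCompact_sphere (0 : EuclideanSpace ℝ (Fin n)) 1).exists_isMaxOn
    (NormedSpace.sphere_nonempty.mpr zero_le_one) T.reApplyInnerSelf_continuous.continuousOn
  have hx₀norm : ‖x₀‖ = 1 := by simpa using hx₀mem
  have hx₀ne : x₀ ≠ 0 := by
    intro h
    rw [h] at hx₀norm
    simp at hx₀norm
  have hloc : IsLocalExtrOn T.reApplyInnerSelf (Metric.sphere (0 : EuclideanSpace ℝ (Fin n)) ‖x₀‖) x₀ := by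
    rw [hx₀norm]
    exact Or.inr hx₀max.localize
  have hev := hsymT.eq_smul_self_of_isLocalExtrOn hloc
  set μ : ℝ := T.rayleighQuotient x₀ with hμ_def
  have hevj : ∀ j, (fisherMatrix p x).mulVec (fun i => x₀ i) j = μ * x₀ j := by
    intro j
    have h2 := congrArg (fun w : EuclideanSpace ℝ (Fin n) => w j) hev
    simpa [hTapp] using h2
  have hμle : μ ≤ lam1 := by
    apply hmax μ (fun i => x₀ i)
    · intro h
      exact hx₀ne (by ext i; simpa using congrFun h i)
    · funext j
      rw [hevj j]
      rfl
  have hμB : μ = B x₀ x₀ := by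
    have h2 : μ = T.reApplyInnerSelf x₀ / ‖x₀‖ ^ 2 := rfl
    rw [h2, hx₀norm, hreap]
    norm_num
  have hQle1 : ∀ u : EuclideanSpace ℝ (Fin n), ‖u‖ = 1 → B u u ≤ lam1 := by
    intro u hu
    have hmem : u ∈ Metric.sphere (0 : EuclideanSpace ℝ (Fin n)) 1 := by simp [hu]
    have h2 := hx₀max hmem
    calc B u u = T.reApplyInnerSelf u := (hreap u).symm
      _ ≤ T.reApplyInnerSelf x₀ := h2
      _ = B x₀ x₀ := hreap x₀
      _ = μ := hμB.symm
      _ ≤ lam1 := hμle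
  have hQle : ∀ δ : EuclideanSpace ℝ (Fin n), B δ δ ≤ lam1 * ‖δ‖ ^ 2 := by
    intro δ
    rcases eq_or_ne δ 0 with rfl | hδ
    · simp
    · have hnorm : ‖δ‖ ≠ 0 := norm_ne_zero_iff.mpr hδ
      have hu : ‖(‖δ‖⁻¹ • δ)‖ = 1 := by
        rw [norm_smul]
        simp [hnorm, abs_of_nonneg (norm_nonneg δ)]
      have hδu : δ = ‖δ‖ • (‖δ‖⁻¹ • δ) := by
        rw [smul_smul]
        simp [hnorm]
      have h1 : B δ δ = ‖δ‖ ^ 2 * B (‖δ‖⁻¹ • δ) (‖δ‖⁻¹ • δ) := by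
        conv_lhs => rw [hδu]
        rw [map_smul]
        simp only [ContinuousLinearMap.smul_apply, map_smul, smul_eq_mul]
        ring
      rw [h1]
      have h2 := hQle1 _ hu
      have h3 := mul_le_mul_of_nonneg_left h2 (sq_nonneg ‖δ‖)
      linarith [h3]
  set v1' : EuclideanSpace ℝ (Fin n) := (WithLp.equiv 2 (Fin n → ℝ)).symm v1 with hv1'_def
  have hv1norm : ‖v1'‖ = 1 := by
    rw [EuclideanSpace.norm_eq]
    simp only [hv1'_def, WithLp.equiv_symm_apply, WithLp.ofLp_toLp, Real.norm_eq_abs, sq_abs]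
    rw [hv_unit, Real.sqrt_one]
  have hBv1 : B v1' v1' = lam1 := by
    rw [hQmat v1']
    have hfun : (fun i => v1' i) = v1 := rfl
    rw [hfun, heig]
    simp only [Pi.smul_apply, smul_eq_mul]
    have h2 : ∀ j, lam1 * v1 j * v1' j = lam1 * v1 j ^ 2 := fun j => by
      show lam1 * v1 j * v1 j = lam1 * v1 j ^ 2
      ring
    simp only [h2]
    rw [← Finset.mul_sum, hv_unit, mul_one]
  have hQv1 : ∀ t : ℝ, B (t • v1') (t • v1') = t ^ 2 * lam1 := by
    intro t
    rw [map_smul]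
    simp only [ContinuousLinearMap.smul_apply, map_smul, smul_eq_mul]
    rw [hBv1]
    ring
  -- assembly
  have hpoint : ∀ δ, (∑ z, p (x + δ) z * Real.log (p (x + δ) z / p x z)) = g' δ := by
    intro δ
    refine Finset.sum_congr rfl fun z _ => ?_
    rw [Real.log_div (hpos _ z).ne' (hpos _ z).ne']
  have happrox : ∀ c : ℝ, 0 < c → ∃ r > 0, ∀ δ : EuclideanSpace ℝ (Fin n), ‖δ‖ ≤ r →
      |(∑ z, p (x + δ) z * Real.log (p (x + δ) z / p x z)) - B δ δ / 2| ≤ c * ‖δ‖ ^ 2 := by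
    intro c hc
    obtain ⟨r, hr, hA⟩ := quad_approx' hg'deriv hDgdiff hD2cont hg'0 hDg0 hB hBsymm hc
    exact ⟨r, hr, fun δ hδ => by rw [hpoint δ]; exact hA δ hδ⟩
  exact sup_tendsto_aux _ (fun δ => B δ δ) lam1 v1' happrox hQle hv1norm hQv1
end
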